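/- arXiv:2306.17470 — 3 statements merged into one kernel-verified Lean document; each statement's English description precedes it below -/
import Mathlib

section
/- One-step descent inequality with noise bound: Under the setting of the composite mirror descent step (X ⊆ ℝⁿ convex, F convex differentiable, H(x) = μ‖x−x₁‖², D^H(a,b) = μ‖a−b‖², X_{t+1} = argmin_{x∈X}{α_t(⟨g_t,x⟩+H(x)) + γ_t D^H(x,X_t)}, Δ_t = g_t − ∇F(X_t)), for every x ∈ X: α_t(Ψ(X_t) − Ψ(x)) + α_t D^H(x, X_{t+1}) + α_t(H(X_{t+1}) − H(X_t)) ≤ γ_t(D^H(x,X_t) − D^H(x,X_{t+1})) + α_t⟨Δ_t, x − X_t⟩ + α_t²‖g_t‖²/(μγ_t). -/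
open RealInnerProductSpace

lemma Bnonneg {A B : ℝ} (hA : 0 ≤ A) (h : ∀ t : ℝ, 0 < t → t ≤ 1 → 0 ≤ A*t^2 + B*t) :
    0 ≤ B := by
  by_contra hB
  push_neg at hB
  set t := min 1 (-B/(2*(A+1))) with hts
  have htpos : 0 < t := lt_min one_pos (by apply div_pos <;> nlinarith)
  have ht1 : t ≤ 1 := min_le_left _ _
  have h0 := h t htpos ht1
  have h2 : t ≤ -B/(2*(A+1)) := min_le_right _ _
  have h2' : t*(2*(A+1)) ≤ -B := by
    rw [← le_div_iff₀ (by positivity)]; exact h2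
  have h3 : 0 ≤ A*t + B := by nlinarith
  nlinarith [mul_le_mul_of_nonneg_left h2' hA]

lemma norm_expand {n : ℕ} (a b v : EuclideanSpace ℝ (Fin n)) (t : ℝ) :
    ‖(a + t • v) - b‖^2 = ‖a - b‖^2 + 2*t*⟪a - b, v⟫ + t^2*‖v‖^2 := by
  have he : (a + t • v) - b = (a - b) + t • v := by abel
  rw [he, norm_add_sq_real, real_inner_smul_right, norm_smul]
  simp [mul_pow, sq_abs]
  ring

lemma grad_ineq {n : ℕ} (F : EuclideanSpace ℝ (Fin n) → ℝ) (hFconv : ConvexOn ℝ Set.univ F)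
    (a b g : EuclideanSpace ℝ (Fin n)) (hg : HasGradientAt F g a) :
    F a + ⟪g, b - a⟫ ≤ F b := by
  set φ : ℝ → ℝ := fun t => F (a + t • (b - a)) with hφ
  have hφconv : ConvexOn ℝ Set.univ φ := by
    have := hFconv.comp_affineMap (AffineMap.lineMap a b)
    have he : φ = F ∘ (AffineMap.lineMap a b) := by
      funext t
      simp [hφ, AffineMap.lineMap_apply, add_comm]
    rw [he]
    simpa using this
  have hd : HasDerivAt φ ⟪g, b - a⟫ 0 := by
    have h1 : HasDerivAt (fun t : ℝ => a + t • (b - a)) (b - a) 0 := by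
      simpa using ((hasDerivAt_id (0:ℝ)).smul_const (b - a)).const_add a
    have h0 : a + (0:ℝ) • (b - a) = a := by simp
    have := (h0 ▸ hg.hasFDerivAt).comp_hasDerivAt 0 h1
    convert this using 1
    · rfl
    · rfl
    · rfl
    · simp [InnerProductSpace.toDual_apply_apply]
  have h3 := hφconv.le_slope_of_hasDerivAt (Set.mem_univ (0:ℝ)) (Set.mem_univ (1:ℝ)) one_pos hd
  have h2 : slope φ 0 1 = F b - F a := by
    simp [slope, hφ]
  rw [h2] at h3
  linarith

theorem stmt9 {n : ℕ}
    (X : Set (EuclideanSpace ℝ (Fin n))) (hXconv : Convex ℝ X)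
    (F : EuclideanSpace ℝ (Fin n) → ℝ) (hFconv : ConvexOn ℝ Set.univ F)
    (gF : EuclideanSpace ℝ (Fin n) → EuclideanSpace ℝ (Fin n))
    (hgF : ∀ x, HasGradientAt F (gF x) x)
    (μ : ℝ) (hμ : 0 < μ) (x₁ : EuclideanSpace ℝ (Fin n)) (hx₁ : x₁ ∈ X)
    (H Ψ : EuclideanSpace ℝ (Fin n) → ℝ)
    (hH : ∀ x, H x = μ * ‖x - x₁‖ ^ 2) (hΨ : ∀ x, Ψ x = F x + H x)
    (DH : EuclideanSpace ℝ (Fin n) → EuclideanSpace ℝ (Fin n) → ℝ)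
    (hDH : ∀ a b, DH a b = μ * ‖a - b‖ ^ 2)
    (Xt Xnext gt : EuclideanSpace ℝ (Fin n)) (hXt : Xt ∈ X) (hXnext : Xnext ∈ X)
    (αt γt : ℝ) (hα : 0 < αt) (hγ : 0 < γt)
    (hprox : IsMinOn (fun x => αt * (⟪gt, x⟫ + H x) + γt * DH x Xt) X Xnext)
    (Δt : EuclideanSpace ℝ (Fin n)) (hΔ : Δt = gt - gF Xt) :
    ∀ x ∈ X,
      αt * (Ψ Xt - Ψ x) + αt * DH x Xnext + αt * (H Xnext - H Xt) ≤
        γt * (DH x Xt - DH x Xnext) + αt * ⟪Δt, x - Xt⟫ +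
          αt ^ 2 * ‖gt‖ ^ 2 / (μ * γt) := by
  intro x hx
  set v : EuclideanSpace ℝ (Fin n) := x - Xnext with hv
  set A : ℝ := (αt + γt) * μ * ‖v‖^2 with hA
  set B : ℝ := αt * ⟪gt, v⟫ + 2*αt*μ*⟪Xnext - x₁, v⟫ + 2*γt*μ*⟪Xnext - Xt, v⟫ with hB
  -- quadratic expansion of the prox objective along the segment
  have hexp : ∀ t : ℝ,
      αt * (⟪gt, Xnext + t • v⟫ + H (Xnext + t • v)) + γt * DH (Xnext + t • v) Xt
        = αt * (⟪gt, Xnext⟫ + H Xnext) + γt * DH Xnext Xt + B * t + A * t^2 := by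
    intro t
    rw [hH, hH, hDH, hDH, norm_expand, norm_expand, inner_add_right,
      real_inner_smul_right, hA, hB]
    ring
  have hAnn : 0 ≤ A := by positivity
  have hmem : ∀ t : ℝ, 0 ≤ t → t ≤ 1 → Xnext + t • v ∈ X := by
    intro t ht0 ht1
    have : Xnext + t • v = (1 - t) • Xnext + t • x := by
      rw [hv]; module
    rw [this]
    exact hXconv hXnext hx (by linarith) ht0 (by ring)
  have hBnn : 0 ≤ B := by
    apply Bnonneg hAnn
    intro t ht0 ht1
    have hm := hprox (hmem t (le_of_lt ht0) ht1)
    simp only [Set.mem_setOf_eq] at hm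
    rw [hexp t] at hm
    nlinarith
  -- the three-point inequality
  have hkey : αt * (⟪gt, Xnext⟫ + μ * ‖Xnext - x₁‖^2) + γt * (μ * ‖Xnext - Xt‖^2)
      + A ≤ αt * (⟪gt, x⟫ + μ * ‖x - x₁‖^2) + γt * (μ * ‖x - Xt‖^2) := by
    have h1 := hexp 1
    have hx1 : Xnext + (1:ℝ) • v = x := by rw [hv]; module
    rw [hx1, hH, hH, hDH, hDH] at h1
    nlinarith
  -- convexity of F
  have hgrad : F Xt + ⟪gF Xt, x - Xt⟫ ≤ F x := grad_ineq F hFconv Xt x (gF Xt) (hgF Xt)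
  -- Young-type bound
  have hyoung : αt * ⟪gt, Xt - Xnext⟫ ≤ γt * μ * ‖Xnext - Xt‖^2 + αt^2 * ‖gt‖^2 / (μ*γt) := by
    have hcs : ⟪gt, Xt - Xnext⟫ ≤ ‖gt‖ * ‖Xt - Xnext‖ := real_inner_le_norm _ _
    have hnorm : ‖Xt - Xnext‖ = ‖Xnext - Xt‖ := norm_sub_rev _ _
    rw [hnorm] at hcs
    have h1 : αt*(‖gt‖*‖Xnext - Xt‖) - γt*μ*‖Xnext - Xt‖^2 ≤ αt^2*‖gt‖^2/(μ*γt) := by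
      rw [le_div_iff₀ (by positivity)]
      nlinarith [sq_nonneg (αt*‖gt‖ - μ*γt*‖Xnext - Xt‖), sq_nonneg (αt*‖gt‖), sq_nonneg (μ*γt*‖Xnext - Xt‖)]
    nlinarith [mul_le_mul_of_nonneg_left hcs hα.le]
  -- combine
  have hΔt : ⟪Δt, x - Xt⟫ = ⟪gt, x⟫ - ⟪gt, Xt⟫ - ⟪gF Xt, x - Xt⟫ := by
    rw [hΔ, inner_sub_left, inner_sub_right]
  have hgtXt : ⟪gt, Xt - Xnext⟫ = ⟪gt, Xt⟫ - ⟪gt, Xnext⟫ := inner_sub_right _ _ _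
  simp only [hΨ, hH, hDH, hΔt]
  rw [hgtXt] at hyoung
  have hA' : A = (αt + γt) * μ * ‖x - Xnext‖^2 := by rw [hA, hv]
  linarith [hkey, hyoung, hA', mul_le_mul_of_nonneg_left hgrad hα.le]
end

section
/- Smoothness upper bound for the aggregated iterate (key step in accelerated analysis): Let F : ℝⁿ → ℝ be convex and L-smooth, H convex, Ψ = F + H. Given X_t^{ag}, X_t^{md}, X_{t+1} ∈ ℝⁿ, weights A_{t−1} ≥ 0, α_t > 0, A_t = A_{t−1} + α_t, suppose X_t^{md} = (A_{t−1}/A_t) X_t^{ag} + (α_t/A_t) X_t and X_{t+1}^{ag} = (A_{t−1}/A_t) X_t^{ag} + (α_t/A_t) X_{t+1}. Then Ψ(X_{t+1}^{ag}) ≤ (A_{t−1}/A_t) Ψ(X_t^{ag}) + (α_t/A_t) l_Ψ(X_{t+1}, X_t^{md}) + (L/2)(α_t²/A_t²)‖X_{t+1} − X_t‖², where l_Ψ(x, y) = F(y) + ⟨∇F(y), x − y⟩ + H(x). -/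
open RealInnerProductSpace

lemma grad_convex_ineq {n : ℕ} {F : EuclideanSpace ℝ (Fin n) → ℝ}
    (hconv : ConvexOn ℝ Set.univ F) {g y : EuclideanSpace ℝ (Fin n)}
    (hg : HasGradientAt F g y) (x : EuclideanSpace ℝ (Fin n)) :
    F y + ⟪g, x - y⟫ ≤ F x := by
  set φ : ℝ → ℝ := fun t => F (t • (x - y) + y) with hφ
  have hφconv : ConvexOn ℝ Set.univ φ := by
    have := hconv.comp_affineMap
      (AffineMap.mk (fun t : ℝ => t • (x - y) + y)
        (LinearMap.smulRight (LinearMap.id (R := ℝ)) (x - y)) (by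
          intro p v
          simp [add_smul, vadd_eq_add]
          abel))
    simpa [hφ, Function.comp_def] using this
  have hline : HasDerivAt (fun t : ℝ => t • (x - y) + y) (x - y) 0 := by
    simpa using ((hasDerivAt_id (0:ℝ)).smul_const (x - y)).add_const y
  have hd : HasDerivAt φ ⟪g, x - y⟫ 0 := by
    have hF : HasFDerivAt F (InnerProductSpace.toDual ℝ _ g) ((0:ℝ) • (x - y) + y) := by
      simpa using hg.hasFDerivAt
    have := hF.comp_hasDerivAt (0:ℝ) hline
    simpa [hφ, Function.comp_def] using this
  have hslope := hφconv.le_slope_of_hasDerivWithinAt_Ioi (Set.mem_univ 0) (Set.mem_univ 1)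
    one_pos hd.hasDerivWithinAt
  have h0 : φ 0 = F y := by simp [hφ]
  have h1 : φ 1 = F x := by simp [hφ]
  rw [slope_def_field, h0, h1] at hslope
  have h2 : ⟪g, x - y⟫ ≤ (F x - F y) / (1 - 0) := hslope
  rw [show (1:ℝ) - 0 = 1 by norm_num, div_one] at h2
  linarith

theorem stmt16 {n : ℕ}
    (F H Ψ : EuclideanSpace ℝ (Fin n) → ℝ)
    (gF : EuclideanSpace ℝ (Fin n) → EuclideanSpace ℝ (Fin n))
    (hgF : ∀ x, HasGradientAt F (gF x) x)
    (hFconv : ConvexOn ℝ Set.univ F)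
    (L : ℝ) (hL : 0 ≤ L)
    (hsmooth : ∀ x y, F x - F y - ⟪gF y, x - y⟫ ≤ L / 2 * ‖x - y‖ ^ 2)
    (hHconv : ConvexOn ℝ Set.univ H)
    (hΨ : ∀ x, Ψ x = F x + H x)
    (lΨ : EuclideanSpace ℝ (Fin n) → EuclideanSpace ℝ (Fin n) → ℝ)
    (hlΨ : ∀ x y, lΨ x y = F y + ⟪gF y, x - y⟫ + H x)
    (Xag Xagnext Xmd Xt Xnext : EuclideanSpace ℝ (Fin n))
    (Aprev αt At : ℝ) (hAprev : 0 ≤ Aprev) (hαt : 0 < αt) (hAt : At = Aprev + αt)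
    (hmd : Xmd = (Aprev / At) • Xag + (αt / At) • Xt)
    (hag : Xagnext = (Aprev / At) • Xag + (αt / At) • Xnext) :
    Ψ Xagnext ≤
      Aprev / At * Ψ Xag + αt / At * lΨ Xnext Xmd +
        L / 2 * (αt ^ 2 / At ^ 2) * ‖Xnext - Xt‖ ^ 2 := by
  have hAtpos : 0 < At := by rw [hAt]; linarith
  set a := Aprev / At with ha
  set b := αt / At with hb
  have ha0 : 0 ≤ a := div_nonneg hAprev hAtpos.le
  have hb0 : 0 < b := div_pos hαt hAtpos
  have hab : a + b = 1 := by
    rw [ha, hb, ← add_div, ← hAt, div_self hAtpos.ne']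
  -- difference identity
  have hdiff : Xagnext - Xmd = b • (Xnext - Xt) := by
    rw [hag, hmd]; module
  -- decomposition using a + b = 1
  have hdec : Xagnext - Xmd = a • (Xag - Xmd) + b • (Xnext - Xmd) := by
    have h1 : a • (Xag - Xmd) + b • (Xnext - Xmd)
        = a • Xag + b • Xnext - (a + b) • Xmd := by module
    rw [h1, hab, one_smul, hag]
  -- smoothness bound
  have hsm : F Xagnext ≤ F Xmd + ⟪gF Xmd, Xagnext - Xmd⟫
      + L / 2 * ‖Xagnext - Xmd‖ ^ 2 := by
    have := hsmooth Xagnext Xmd; linarith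
  have hnorm : ‖Xagnext - Xmd‖ ^ 2 = αt ^ 2 / At ^ 2 * ‖Xnext - Xt‖ ^ 2 := by
    rw [hdiff, norm_smul, mul_pow, Real.norm_eq_abs, sq_abs, hb, div_pow]
  have hinner : ⟪gF Xmd, Xagnext - Xmd⟫
      = a * ⟪gF Xmd, Xag - Xmd⟫ + b * ⟪gF Xmd, Xnext - Xmd⟫ := by
    rw [hdec, inner_add_right, real_inner_smul_right, real_inner_smul_right]
  -- convexity of F at Xmd towards Xag
  have hFgrad : F Xmd + ⟪gF Xmd, Xag - Xmd⟫ ≤ F Xag :=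
    grad_convex_ineq hFconv (hgF Xmd) Xag
  -- convexity of H
  have hH : H Xagnext ≤ a * H Xag + b * H Xnext := by
    have := hHconv.2 (Set.mem_univ Xag) (Set.mem_univ Xnext) ha0 hb0.le hab
    simpa [hag, smul_eq_mul] using this
  have hmulF : a * (F Xmd + ⟪gF Xmd, Xag - Xmd⟫) ≤ a * F Xag :=
    mul_le_mul_of_nonneg_left hFgrad ha0
  have key : F Xmd = a * F Xmd + b * F Xmd := by
    rw [← add_mul, hab, one_mul]
  rw [hΨ, hΨ, hlΨ]
  calc F Xagnext + H Xagnext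
      ≤ (F Xmd + (a * ⟪gF Xmd, Xag - Xmd⟫ + b * ⟪gF Xmd, Xnext - Xmd⟫)
          + L / 2 * (αt ^ 2 / At ^ 2 * ‖Xnext - Xt‖ ^ 2))
        + (a * H Xag + b * H Xnext) := by
        rw [← hinner, ← hnorm]; linarith
    _ ≤ a * (F Xag + H Xag) + b * (F Xmd + ⟪gF Xmd, Xnext - Xmd⟫ + H Xnext)
        + L / 2 * (αt ^ 2 / At ^ 2) * ‖Xnext - Xt‖ ^ 2 := by nlinarith [hmulF]
end

section
/- Accelerated oblivious mirror descent bound (Theorem 3, deterministic form): Let X ⊆ ℝⁿ convex, F convex L-smooth, H(x) = μ‖x−x₁‖² with μ>0, Ψ = F+H, step-sizes with γ_{t+1} − γ_t ≤ α_t and α_t ≤ α_{t+1}. Define A_t = Σ_{s=1}^t α_s and the accelerated iterates: X_t^{md} = (A_{t−1}/A_t)X_t^{ag} + (α_t/A_t)X_t; X_{t+1} = argmin_{x∈X}{α_t(⟨g_t, x⟩ + H(x)) + γ_t D^H(x, X_t)} with g_t = ∇F(X_t^{md}) + Δ_t; X_{t+1}^{ag} = (A_{t−1}/A_t)X_t^{ag}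 + (α_t/A_t)X_{t+1}. Let T₀ = max{ t : 2L/μ ≥ γ_t A_t / α_t² }. Then for every x ∈ X and T ≥ 1: A_T (Ψ(X_{T+1}^{ag}) − Ψ(x)) + γ_T D^H(x, X_{T+1}) ≤ γ₁ D^H(x, x₁) + Σ_{t=1}^T α_t ⟨Δ_t, x − X_t⟩ + (L/2) Σ_{t=1}^{T₀} (α_t²/A_t)‖X_{t+1} − X_t‖² + Σ_{t=1}^T (2α_t²/(μγ_t))‖Δ_t‖². -/
open RealInnerProductSpace


variable {E : Type*} [NormedAddCommGroup E] [InnerProductSpace ℝ E] [CompleteSpace E]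

theorem aux_grad_convex {F : E → ℝ} (hF : ConvexOn ℝ Set.univ F)
    {x g : E} (hg : HasGradientAt F g x) (y : E) :
    F x + ⟪g, y - x⟫ ≤ F y := by
  set v := y - x with hv
  have hline : HasDerivAt (fun τ : ℝ => x + τ • v) v 0 := by
    simpa using ((hasDerivAt_id (0:ℝ)).smul_const v).const_add x
  have hcomp : HasDerivAt (fun τ : ℝ => F (x + τ • v)) ⟪g, v⟫ 0 := by
    have hF' : HasFDerivAt F ((InnerProductSpace.toDual ℝ E) g) (x + (0:ℝ) • v) := by
      simpa using hg.hasFDerivAt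
    have := hF'.comp_hasDerivAt 0 hline
    simpa [InnerProductSpace.toDual_apply_apply, Function.comp_def] using this
  rw [hasDerivAt_iff_tendsto_slope] at hcomp
  have hmono : Filter.Tendsto (slope (fun τ : ℝ => F (x + τ • v)) 0) (nhdsWithin 0 (Set.Ioi 0)) (nhds ⟪g, v⟫) :=
    hcomp.mono_left (nhdsWithin_mono 0 (fun z hz => ne_of_gt hz))
  have hbound : ∀ᶠ τ in nhdsWithin (0:ℝ) (Set.Ioi 0),
      slope (fun τ : ℝ => F (x + τ • v)) 0 τ ≤ F y - F x := by
    filter_upwards [Ioc_mem_nhdsGT_of_mem (Set.mem_Ico.2 ⟨le_refl (0:ℝ), one_pos⟩)] with τ hτ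
    obtain ⟨hτ0, hτ1⟩ := hτ
    have hmem : (1 - τ) • x + τ • y = x + τ • v := by
      rw [hv]; module
    have hconv := hF.2 (Set.mem_univ x) (Set.mem_univ y) (by linarith : (0:ℝ) ≤ 1 - τ)
      (le_of_lt hτ0) (by ring)
    rw [hmem] at hconv
    simp only [smul_eq_mul] at hconv
    have hslope : slope (fun τ : ℝ => F (x + τ • v)) 0 τ = (F (x + τ • v) - F x) / τ := by
      rw [slope_def_field]; norm_num
    rw [hslope, div_le_iff₀ hτ0]
    nlinarith [hconv]
  have := le_of_tendsto hmono hbound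
  linarith

theorem aux_combo_sq (u v : E) (c : ℝ) :
    ‖c • u + (1 - c) • v‖ ^ 2
      = c * ‖u‖ ^ 2 + (1 - c) * ‖v‖ ^ 2 - c * (1 - c) * ‖u - v‖ ^ 2 := by
  have h1 : ∀ w : E, ‖w‖ ^ 2 = ⟪w, w⟫ := fun w => (real_inner_self_eq_norm_sq w).symm
  rw [h1, h1, h1, h1]
  simp only [inner_add_add_self, inner_sub_sub_self, real_inner_smul_left, real_inner_smul_right]
  ring

theorem aux_quad_min {X : Set E} (hX : Convex ℝ X) (B : E) {c : ℝ} (hc : 0 ≤ c)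
    {p : E} (hp : p ∈ X)
    (hmin : ∀ y ∈ X, ⟪B, p⟫ + c * ‖p‖ ^ 2 ≤ ⟪B, y⟫ + c * ‖y‖ ^ 2) :
    ∀ x ∈ X, ⟪B, p⟫ + c * ‖p‖ ^ 2 + c * ‖x - p‖ ^ 2 ≤ ⟪B, x⟫ + c * ‖x‖ ^ 2 := by
  intro x hx
  set w := x - p with hw
  have hxw : x = p + w := by rw [hw]; abel
  have hnx : ‖x‖ ^ 2 = ‖p‖ ^ 2 + 2 * ⟪p, w⟫ + ‖w‖ ^ 2 := by
    rw [hxw, norm_add_sq_real]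
  have hBx : ⟪B, x⟫ = ⟪B, p⟫ + ⟪B, w⟫ := by rw [hxw, inner_add_right]
  set V : ℝ := ⟪B, w⟫ + 2 * c * ⟪p, w⟫ with hV
  set C : ℝ := c * ‖w‖ ^ 2 with hC
  have hCnn : 0 ≤ C := by positivity
  have hkey : ∀ lam : ℝ, 0 ≤ lam → lam ≤ 1 → 0 ≤ lam * V + lam ^ 2 * C := by
    intro lam h0 h1
    have hmem : p + lam • w ∈ X := by
      have := hX hp hx (by linarith : (0:ℝ) ≤ 1 - lam) h0 (by ring)
      have heq : (1 - lam) • p + lam • x = p + lam • w := by rw [hw]; module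
      rwa [heq] at this
    have := hmin _ hmem
    have hn2 : ‖p + lam • w‖ ^ 2 = ‖p‖ ^ 2 + 2 * lam * ⟪p, w⟫ + lam ^ 2 * ‖w‖ ^ 2 := by
      rw [norm_add_sq_real, real_inner_smul_right, norm_smul]
      simp [Real.norm_eq_abs]
      nlinarith [sq_abs lam]
    have hBi : ⟪B, p + lam • w⟫ = ⟪B, p⟫ + lam * ⟪B, w⟫ := by
      rw [inner_add_right, real_inner_smul_right]
    rw [hBi, hn2] at this
    nlinarith [this]
  have hVnn : 0 ≤ V := by
    by_contra hneg
    push_neg at hneg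
    set lam := min 1 (-V / (2 * (C + 1))) with hlam
    have hl0 : 0 < lam := by
      apply lt_min one_pos
      apply div_pos (by linarith) (by positivity)
    have hl1 : lam ≤ 1 := min_le_left _ _
    have hlle : lam ≤ -V / (2 * (C + 1)) := min_le_right _ _
    have h2 := hkey lam (le_of_lt hl0) hl1
    have hdiv : lam * C ≤ -V / 2 := by
      have h3 : lam * (C + 1) ≤ -V / 2 := by
        have := mul_le_mul_of_nonneg_right hlle (by positivity : (0:ℝ) ≤ C + 1)
        rw [div_mul_eq_mul_div] at this
        calc lam * (C + 1) ≤ -V * (C + 1) / (2 * (C + 1)) := this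
          _ = -V / 2 := by field_simp
      nlinarith [hl0]
    nlinarith [hl0, sq_nonneg lam]
  nlinarith [hVnn, hCnn]

theorem aux_three_point {X : Set E} (hX : Convex ℝ X) {a gm μ : ℝ} (ha : 0 < a)
    (hgm : 0 < gm) (hμ : 0 < μ) (gv x₁ Xt : E) {p : E} (hp : p ∈ X)
    (hmin : ∀ y ∈ X, a * (⟪gv, p⟫ + μ * ‖p - x₁‖ ^ 2) + gm * (μ * ‖p - Xt‖ ^ 2)
        ≤ a * (⟪gv, y⟫ + μ * ‖y - x₁‖ ^ 2) + gm * (μ * ‖y - Xt‖ ^ 2)) :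
    ∀ x ∈ X, a * (⟪gv, p⟫ + μ * ‖p - x₁‖ ^ 2) + gm * (μ * ‖p - Xt‖ ^ 2)
        + (a + gm) * μ * ‖x - p‖ ^ 2
        ≤ a * (⟪gv, x⟫ + μ * ‖x - x₁‖ ^ 2) + gm * (μ * ‖x - Xt‖ ^ 2) := by
  set B := a • gv - (2*a*μ) • x₁ - (2*gm*μ) • Xt with hB
  set c := (a + gm) * μ with hc
  have hcnn : 0 ≤ c := by rw [hc]; positivity
  have hexp : ∀ y : E, a * (⟪gv, y⟫ + μ * ‖y - x₁‖ ^ 2) + gm * (μ * ‖y - Xt‖ ^ 2)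
      = (⟪B, y⟫ + c * ‖y‖ ^ 2) + (a * μ * ‖x₁‖ ^ 2 + gm * μ * ‖Xt‖ ^ 2) := by
    intro y
    have e1 : ‖y - x₁‖ ^ 2 = ‖y‖ ^ 2 - 2 * ⟪y, x₁⟫ + ‖x₁‖ ^ 2 := norm_sub_sq_real y x₁
    have e2 : ‖y - Xt‖ ^ 2 = ‖y‖ ^ 2 - 2 * ⟪y, Xt⟫ + ‖Xt‖ ^ 2 := norm_sub_sq_real y Xt
    have e3 : ⟪B, y⟫ = a * ⟪gv, y⟫ - 2*a*μ * ⟪x₁, y⟫ - 2*gm*μ * ⟪Xt, y⟫ := by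
      simp [hB, inner_sub_left, real_inner_smul_left]
    rw [e1, e2, e3, real_inner_comm x₁ y, real_inner_comm Xt y, hc]; ring
  have hmin' : ∀ y ∈ X, ⟪B, p⟫ + c * ‖p‖ ^ 2 ≤ ⟪B, y⟫ + c * ‖y‖ ^ 2 := by
    intro y hy
    have h := hmin y hy
    rw [hexp p, hexp y] at h
    linarith
  intro x hx
  have h := aux_quad_min hX B hcnn hp hmin' x hx
  rw [hexp p, hexp x]
  have hcc : (a + gm) * μ * ‖x - p‖ ^ 2 = c * ‖x - p‖ ^ 2 := by rw [hc]
  linarith [h, hcc.le, hcc.ge]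



set_option maxHeartbeats 2000000 in
theorem stmt18 {n : ℕ}
    (X : Set (EuclideanSpace ℝ (Fin n))) (hXconv : Convex ℝ X)
    (F : EuclideanSpace ℝ (Fin n) → ℝ) (hFconv : ConvexOn ℝ Set.univ F)
    (gF : EuclideanSpace ℝ (Fin n) → EuclideanSpace ℝ (Fin n))
    (hgF : ∀ x, HasGradientAt F (gF x) x)
    (L : ℝ) (hL : 0 < L)
    (hsmooth : ∀ x y, F x - F y - ⟪gF y, x - y⟫ ≤ L / 2 * ‖x - y‖ ^ 2)
    (μ : ℝ) (hμ : 0 < μ) (x₁ : EuclideanSpace ℝ (Fin n)) (hx₁ : x₁ ∈ X)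
    (H Ψ : EuclideanSpace ℝ (Fin n) → ℝ)
    (hH : ∀ x, H x = μ * ‖x - x₁‖ ^ 2) (hΨ : ∀ x, Ψ x = F x + H x)
    (DH : EuclideanSpace ℝ (Fin n) → EuclideanSpace ℝ (Fin n) → ℝ)
    (hDH : ∀ a b, DH a b = μ * ‖a - b‖ ^ 2)
    (α γ : ℕ → ℝ) (hαpos : ∀ t ≥ 1, 0 < α t) (hγpos : ∀ t ≥ 1, 0 < γ t)
    (hstep : ∀ t ≥ 1, γ (t + 1) - γ t ≤ α t) (hmono : ∀ t ≥ 1, α t ≤ α (t + 1))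
    (A : ℕ → ℝ) (hA : ∀ t, A t = ∑ s ∈ Finset.Icc 1 t, α s)
    (Xs Xag Xmd : ℕ → EuclideanSpace ℝ (Fin n))
    (g Δ : ℕ → EuclideanSpace ℝ (Fin n))
    (hXs1 : Xs 1 = x₁) (hXag1 : Xag 1 = x₁)
    (hXmem : ∀ t ≥ 1, Xs t ∈ X)
    (hmd : ∀ t ≥ 1, Xmd t = (A (t - 1) / A t) • Xag t + (α t / A t) • Xs t)
    (hg : ∀ t ≥ 1, g t = gF (Xmd t) + Δ t)
    (hprox : ∀ t ≥ 1,
      IsMinOn (fun x => α t * (⟪g t, x⟫ + H x) + γ t * DH x (Xs t)) X (Xs (t + 1)))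
    (hagnext : ∀ t ≥ 1,
      Xag (t + 1) = (A (t - 1) / A t) • Xag t + (α t / A t) • Xs (t + 1))
    (S : Set ℕ) (hS : S = {t : ℕ | 1 ≤ t ∧ 2 * L / μ ≥ γ t * A t / (α t) ^ 2})
    (hSbdd : BddAbove S) (T₀ : ℕ) (hT₀ : T₀ = sSup S)
    (T : ℕ) (hT : 1 ≤ T) :
    ∀ x ∈ X,
      A T * (Ψ (Xag (T + 1)) - Ψ x) + γ T * DH x (Xs (T + 1)) ≤
        γ 1 * DH x x₁ + ∑ t ∈ Finset.Icc 1 T, α t * ⟪Δ t, x - Xs t⟫ +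
          L / 2 * ∑ t ∈ Finset.Icc 1 T₀, (α t) ^ 2 / A t * ‖Xs (t + 1) - Xs t‖ ^ 2 +
          ∑ t ∈ Finset.Icc 1 T, 2 * (α t) ^ 2 / (μ * γ t) * ‖Δ t‖ ^ 2 := by
  intro x hx
  have hA0 : A 0 = 0 := by simp [hA]
  have hAsucc : ∀ t : ℕ, 1 ≤ t → A t = A (t - 1) + α t := by
    intro t ht
    obtain ⟨s, rfl⟩ : ∃ s, t = s + 1 := ⟨t - 1, (Nat.succ_pred_eq_of_pos ht).symm⟩
    rw [hA, hA, Finset.sum_Icc_succ_top (by omega : 1 ≤ s + 1)]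
    simp
  have hApos : ∀ t : ℕ, 1 ≤ t → 0 < A t := by
    intro t ht
    rw [hA]
    apply Finset.sum_pos
    · intro i hi; exact hαpos i (Finset.mem_Icc.1 hi).1
    · exact ⟨1, Finset.mem_Icc.2 ⟨le_rfl, ht⟩⟩
  have hAnn : ∀ t : ℕ, 0 ≤ A t := by
    intro t
    rcases Nat.eq_zero_or_pos t with h | h
    · rw [h, hA0]
    · exact (hApos t h).le
  set Ef : ℕ → ℝ :=
    fun s => if s ≤ T₀ then L / 2 * ((α s) ^ 2 / A s * ‖Xs (s + 1) - Xs s‖ ^ 2) else 0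
    with hEf
  -- per-step key inequality
  have key : ∀ t : ℕ, 1 ≤ t →
      A t * (Ψ (Xag (t + 1)) - Ψ x) + (γ t + α t) * (μ * ‖x - Xs (t + 1)‖ ^ 2) ≤
        A (t - 1) * (Ψ (Xag t) - Ψ x) + γ t * (μ * ‖x - Xs t‖ ^ 2)
          + α t * ⟪Δ t, x - Xs t⟫ + Ef t + 2 * (α t) ^ 2 / (μ * γ t) * ‖Δ t‖ ^ 2 := by
    intro t ht
    have ha : 0 < α t := hαpos t ht
    have hgm : 0 < γ t := hγpos t ht
    have hAt : 0 < A t := hApos t ht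
    have hAtne : A t ≠ 0 := hAt.ne'
    have hAtm : 0 ≤ A (t - 1) := hAnn (t - 1)
    have hAe : A t = A (t - 1) + α t := hAsucc t ht
    -- vector identity for Xag (t+1) - Xmd t
    have hvd : Xag (t + 1) - Xmd t = (α t / A t) • (Xs (t + 1) - Xs t) := by
      rw [hagnext t ht, hmd t ht]; module
    -- scalar identity: A t * ⟪G, Xmd t⟫
    have e1 : A t * (A (t - 1) / A t) = A (t - 1) := by field_simp
    have e2 : A t * (α t / A t) = α t := by field_simp
    have h1 : A t • Xmd t = A (t - 1) • Xag t + α t • Xs t := by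
      rw [hmd t ht, smul_add, smul_smul, smul_smul, e1, e2]
    have hsG : A t * ⟪gF (Xmd t), Xmd t⟫
        = A (t - 1) * ⟪gF (Xmd t), Xag t⟫ + α t * ⟪gF (Xmd t), Xs t⟫ := by
      have h2 : ⟪gF (Xmd t), A t • Xmd t⟫
          = ⟪gF (Xmd t), A (t - 1) • Xag t + α t • Xs t⟫ := by rw [h1]
      rw [inner_add_right, real_inner_smul_right, real_inner_smul_right,
        real_inner_smul_right] at h2
      exact h2
    -- smoothness step
    have hnormsq : ‖Xag (t + 1) - Xmd t‖ ^ 2 = (α t / A t) ^ 2 * ‖Xs (t + 1) - Xs t‖ ^ 2 := by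
      rw [hvd, norm_smul, mul_pow, Real.norm_eq_abs, sq_abs]
    have hinn2 : ⟪gF (Xmd t), Xag (t + 1) - Xmd t⟫
        = (α t / A t) * (⟪gF (Xmd t), Xs (t + 1)⟫ - ⟪gF (Xmd t), Xs t⟫) := by
      rw [hvd, real_inner_smul_right, inner_sub_right]
    have hs0 := hsmooth (Xag (t + 1)) (Xmd t)
    rw [hinn2, hnormsq] at hs0
    have hs1 := mul_le_mul_of_nonneg_left hs0 hAt.le
    have e3 : A t * ((α t / A t) * (⟪gF (Xmd t), Xs (t + 1)⟫ - ⟪gF (Xmd t), Xs t⟫))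
        = α t * ⟪gF (Xmd t), Xs (t + 1)⟫ - α t * ⟪gF (Xmd t), Xs t⟫ := by
      field_simp
    have e4 : A t * (L / 2 * ((α t / A t) ^ 2 * ‖Xs (t + 1) - Xs t‖ ^ 2))
        = L / 2 * ((α t) ^ 2 / A t * ‖Xs (t + 1) - Xs t‖ ^ 2) := by
      field_simp
    have hsm : A t * F (Xag (t + 1)) ≤ A t * F (Xmd t)
        + (α t * ⟪gF (Xmd t), Xs (t + 1)⟫ - α t * ⟪gF (Xmd t), Xs t⟫)
        + L / 2 * ((α t) ^ 2 / A t * ‖Xs (t + 1) - Xs t‖ ^ 2) := by nlinarith only [hs1, e3, e4]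
    -- convexity of F at Xmd t
    have hc1 : F (Xmd t) + (⟪gF (Xmd t), Xag t⟫ - ⟪gF (Xmd t), Xmd t⟫) ≤ F (Xag t) := by
      have := aux_grad_convex hFconv (hgF (Xmd t)) (Xag t)
      rwa [inner_sub_right] at this
    have hc2 : F (Xmd t) + (⟪gF (Xmd t), x⟫ - ⟪gF (Xmd t), Xmd t⟫) ≤ F x := by
      have := aux_grad_convex hFconv (hgF (Xmd t)) x
      rwa [inner_sub_right] at this
    have hc1m := mul_le_mul_of_nonneg_left hc1 hAtm
    have hc2m := mul_le_mul_of_nonneg_left hc2 ha.le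
    have eGM : A t * ⟪gF (Xmd t), Xmd t⟫
        = A (t - 1) * ⟪gF (Xmd t), Xmd t⟫ + α t * ⟪gF (Xmd t), Xmd t⟫ := by
      rw [hAe]; ring
    have eFM : A t * F (Xmd t) = A (t - 1) * F (Xmd t) + α t * F (Xmd t) := by
      rw [hAe]; ring
    -- H combination
    have hcc1 : 1 - A (t - 1) / A t = α t / A t := by
      rw [eq_div_iff hAtne, sub_mul, one_mul, div_mul_cancel₀ _ hAtne]
      linarith [hAe]
    have hvag : Xag (t + 1) - x₁
        = (A (t - 1) / A t) • (Xag t - x₁) + (1 - A (t - 1) / A t) • (Xs (t + 1) - x₁) := by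
      rw [hagnext t ht, ← hcc1]; module
    have hcb := aux_combo_sq (Xag t - x₁) (Xs (t + 1) - x₁) (A (t - 1) / A t)
    rw [← hvag, hcc1] at hcb
    have hHcomb : A t * (μ * ‖Xag (t + 1) - x₁‖ ^ 2)
        ≤ A (t - 1) * (μ * ‖Xag t - x₁‖ ^ 2) + α t * (μ * ‖Xs (t + 1) - x₁‖ ^ 2) := by
      have hrw : A t * (μ * ‖Xag (t + 1) - x₁‖ ^ 2)
          = μ * (A (t - 1) * ‖Xag t - x₁‖ ^ 2 + α t * ‖Xs (t + 1) - x₁‖ ^ 2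
            - A (t - 1) * (α t / A t) * ‖(Xag t - x₁) - (Xs (t + 1) - x₁)‖ ^ 2) := by
        rw [hcb]; field_simp
      have hnn : 0 ≤ μ * (A (t - 1) * (α t / A t) * ‖(Xag t - x₁) - (Xs (t + 1) - x₁)‖ ^ 2) := by
        have : 0 ≤ α t / A t := by positivity
        positivity
      rw [hrw]; linarith only [hnn]
    -- three-point (prox) inequality
    have hmin' : ∀ y ∈ X,
        α t * (⟪g t, Xs (t + 1)⟫ + μ * ‖Xs (t + 1) - x₁‖ ^ 2)
          + γ t * (μ * ‖Xs (t + 1) - Xs t‖ ^ 2)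
        ≤ α t * (⟪g t, y⟫ + μ * ‖y - x₁‖ ^ 2) + γ t * (μ * ‖y - Xs t‖ ^ 2) := by
      intro y hy
      have h := (isMinOn_iff.mp (hprox t ht)) y hy
      simp only [hH, hDH] at h
      exact h
    have htp := aux_three_point hXconv ha hgm hμ (g t) x₁ (Xs t)
      (hXmem (t + 1) (by omega)) hmin' x hx
    rw [hg t ht] at htp
    simp only [inner_add_left] at htp
    -- Young's inequality
    have hyoung : α t * ⟪Δ t, Xs t - Xs (t + 1)⟫
        ≤ 2 * (α t) ^ 2 / (μ * γ t) * ‖Δ t‖ ^ 2 + μ * γ t / 4 * ‖Xs (t + 1) - Xs t‖ ^ 2 := by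
      have hCS : ⟪Δ t, Xs t - Xs (t + 1)⟫ ≤ ‖Δ t‖ * ‖Xs (t + 1) - Xs t‖ := by
        have := real_inner_le_norm (Δ t) (Xs t - Xs (t + 1))
        rwa [norm_sub_rev (Xs t)] at this
      have h5 : α t * ⟪Δ t, Xs t - Xs (t + 1)⟫ ≤ α t * (‖Δ t‖ * ‖Xs (t + 1) - Xs t‖) :=
        mul_le_mul_of_nonneg_left hCS ha.le
      have hP : 0 < μ * γ t := mul_pos hμ hgm
      have h6 : 0 ≤ (α t) ^ 2 / (μ * γ t) * ‖Δ t‖ ^ 2 + μ * γ t / 4 * ‖Xs (t + 1) - Xs t‖ ^ 2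
          - α t * (‖Δ t‖ * ‖Xs (t + 1) - Xs t‖) := by
        have hkey : ((α t) ^ 2 / (μ * γ t) * ‖Δ t‖ ^ 2
              + μ * γ t / 4 * ‖Xs (t + 1) - Xs t‖ ^ 2
              - α t * (‖Δ t‖ * ‖Xs (t + 1) - Xs t‖)) * (μ * γ t)
            = (α t * ‖Δ t‖ - μ * γ t / 2 * ‖Xs (t + 1) - Xs t‖) ^ 2
              + α t * ‖Δ t‖ * (μ * γ t) * ‖Xs (t + 1) - Xs t‖
              - α t * (‖Δ t‖ * ‖Xs (t + 1) - Xs t‖) * (μ * γ t) := by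
          field_simp
          ring
        have h7 : 0 ≤ ((α t) ^ 2 / (μ * γ t) * ‖Δ t‖ ^ 2
              + μ * γ t / 4 * ‖Xs (t + 1) - Xs t‖ ^ 2
              - α t * (‖Δ t‖ * ‖Xs (t + 1) - Xs t‖)) * (μ * γ t) := by
          rw [hkey]
          nlinarith only [sq_nonneg (α t * ‖Δ t‖ - μ * γ t / 2 * ‖Xs (t + 1) - Xs t‖)]
        exact (mul_nonneg_iff_of_pos_right hP).mp h7
      have h8 : 0 ≤ (α t) ^ 2 / (μ * γ t) * ‖Δ t‖ ^ 2 := by positivity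
      have h9 : (α t) ^ 2 / (μ * γ t) * ‖Δ t‖ ^ 2 + (α t) ^ 2 / (μ * γ t) * ‖Δ t‖ ^ 2
          = 2 * (α t) ^ 2 / (μ * γ t) * ‖Δ t‖ ^ 2 := by ring
      linarith
    -- coefficient / Ef bound
    have hNnn : (0:ℝ) ≤ ‖Xs (t + 1) - Xs t‖ ^ 2 := sq_nonneg _
    have hcoef : L / 2 * ((α t) ^ 2 / A t * ‖Xs (t + 1) - Xs t‖ ^ 2)
        ≤ Ef t + 3 / 4 * (μ * γ t) * ‖Xs (t + 1) - Xs t‖ ^ 2 := by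
      by_cases hle : t ≤ T₀
      · have hEt : Ef t = L / 2 * ((α t) ^ 2 / A t * ‖Xs (t + 1) - Xs t‖ ^ 2) := by
          simp only [hEf, if_pos hle]
        rw [hEt]
        have hnn2 : 0 ≤ μ * γ t * ‖Xs (t + 1) - Xs t‖ ^ 2 :=
          mul_nonneg (mul_pos hμ hgm).le hNnn
        linarith only [hnn2]
      · have hEt : Ef t = 0 := by simp only [hEf, if_neg hle]
        have htS : t ∉ S := by
          intro hmem
          exact hle (hT₀ ▸ le_csSup hSbdd hmem)
        rw [hS] at htS
        have hlt : 2 * L / μ < γ t * A t / (α t) ^ 2 := by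
          by_contra hcon
          push_neg at hcon
          exact htS ⟨ht, by linarith⟩
        have h1 : 2 * L * (α t) ^ 2 < γ t * A t * μ :=
          (div_lt_div_iff₀ hμ (pow_pos ha 2)).1 hlt
        have hq2 : 2 * L * ((α t) ^ 2 / A t) * A t = 2 * L * (α t) ^ 2 := by
          field_simp
        have h3 : 2 * L * ((α t) ^ 2 / A t) ≤ μ * γ t := by nlinarith only [h1, hq2, hAt]
        rw [hEt]
        have h4 := mul_le_mul_of_nonneg_right h3 hNnn
        have hnn2 : 0 ≤ μ * γ t * ‖Xs (t + 1) - Xs t‖ ^ 2 :=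
          mul_nonneg (mul_pos hμ hgm).le hNnn
        linarith only [h4, hnn2]
    -- expansion equalities
    have eΨ1 : A t * (Ψ (Xag (t + 1)) - Ψ x)
        = A t * F (Xag (t + 1)) + A t * (μ * ‖Xag (t + 1) - x₁‖ ^ 2)
          - (A (t - 1) * F x + A (t - 1) * (μ * ‖x - x₁‖ ^ 2)
             + α t * F x + α t * (μ * ‖x - x₁‖ ^ 2)) := by
      rw [hΨ, hΨ, hH, hH, hAe]; ring
    have eΨ2 : A (t - 1) * (Ψ (Xag t) - Ψ x)
        = A (t - 1) * F (Xag t) + A (t - 1) * (μ * ‖Xag t - x₁‖ ^ 2)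
          - A (t - 1) * F x - A (t - 1) * (μ * ‖x - x₁‖ ^ 2) := by
      rw [hΨ, hΨ, hH, hH]; ring
    have ed1 : α t * ⟪Δ t, Xs t - Xs (t + 1)⟫
        = α t * ⟪Δ t, Xs t⟫ - α t * ⟪Δ t, Xs (t + 1)⟫ := by
      rw [inner_sub_right]; ring
    have ed2 : α t * ⟪Δ t, x - Xs t⟫ = α t * ⟪Δ t, x⟫ - α t * ⟪Δ t, Xs t⟫ := by
      rw [inner_sub_right]; ring
    -- final assembly
    linarith only [hsm, hc1m, hc2m, hsG, eGM, eFM, hHcomb, htp, hyoung, hcoef, eΨ1, eΨ2, ed1, ed2]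
  have hmain : ∀ T' : ℕ, 1 ≤ T' →
      A T' * (Ψ (Xag (T' + 1)) - Ψ x) + (γ T' + α T') * (μ * ‖x - Xs (T' + 1)‖ ^ 2) ≤
        γ 1 * (μ * ‖x - x₁‖ ^ 2) + (∑ t ∈ Finset.Icc 1 T', α t * ⟪Δ t, x - Xs t⟫)
          + (∑ t ∈ Finset.Icc 1 T', Ef t)
          + ∑ t ∈ Finset.Icc 1 T', 2 * (α t) ^ 2 / (μ * γ t) * ‖Δ t‖ ^ 2 := by
    intro T' hT'
    induction T', hT' using Nat.le_induction with
    | base =>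
      have hk := key 1 le_rfl
      rw [show (1:ℕ) - 1 = 0 from rfl, hA0, hXs1] at hk
      simp only [Finset.Icc_self, Finset.sum_singleton, hXs1]
      linarith only [hk]
    | succ m hm ih =>
      have hk := key (m + 1) (by omega)
      rw [show m + 1 - 1 = m from rfl] at hk
      have hγ1 : γ (m + 1) ≤ γ m + α m := by
        have := hstep m hm; linarith only [this]
      have hmm : γ (m + 1) * (μ * ‖x - Xs (m + 1)‖ ^ 2)
          ≤ (γ m + α m) * (μ * ‖x - Xs (m + 1)‖ ^ 2) :=
        mul_le_mul_of_nonneg_right hγ1 (by positivity)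
      rw [Finset.sum_Icc_succ_top (by omega : 1 ≤ m + 1),
        Finset.sum_Icc_succ_top (by omega : 1 ≤ m + 1),
        Finset.sum_Icc_succ_top (by omega : 1 ≤ m + 1)]
      linarith only [hk, ih, hmm]
  have hfinal := hmain T hT
  have h1 : γ T * DH x (Xs (T + 1)) ≤ (γ T + α T) * (μ * ‖x - Xs (T + 1)‖ ^ 2) := by
    rw [hDH]
    have h0 := mul_le_mul_of_nonneg_right
      (by linarith only [hαpos T hT] : γ T ≤ γ T + α T)
      (by positivity : (0:ℝ) ≤ μ * ‖x - Xs (T + 1)‖ ^ 2)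
    linarith only [h0]
  have h2 : (∑ t ∈ Finset.Icc 1 T, Ef t)
      ≤ L / 2 * ∑ t ∈ Finset.Icc 1 T₀, (α t) ^ 2 / A t * ‖Xs (t + 1) - Xs t‖ ^ 2 := by
    rw [Finset.mul_sum]
    calc ∑ t ∈ Finset.Icc 1 T, Ef t
        = ∑ t ∈ (Finset.Icc 1 T).filter (fun s => s ≤ T₀),
            L / 2 * ((α t) ^ 2 / A t * ‖Xs (t + 1) - Xs t‖ ^ 2) := by
          simp only [hEf]
          rw [Finset.sum_filter]
      _ ≤ ∑ t ∈ Finset.Icc 1 T₀,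
            L / 2 * ((α t) ^ 2 / A t * ‖Xs (t + 1) - Xs t‖ ^ 2) := by
          apply Finset.sum_le_sum_of_subset_of_nonneg
          · intro i hi
            simp only [Finset.mem_filter, Finset.mem_Icc] at hi
            exact Finset.mem_Icc.2 ⟨hi.1.1, hi.2⟩
          · intro i hi _
            have hi1 : 1 ≤ i := (Finset.mem_Icc.1 hi).1
            have hd : 0 ≤ (α i) ^ 2 / A i := div_nonneg (sq_nonneg _) (hApos i hi1).le
            exact mul_nonneg (by positivity)
              (mul_nonneg hd (sq_nonneg ‖Xs (i + 1) - Xs i‖))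
  have hDH1 : γ 1 * DH x x₁ = γ 1 * (μ * ‖x - x₁‖ ^ 2) := by rw [hDH]
  linarith only [hfinal, h1, h2, hDH1]
end
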